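/- Let R be a right zero semigroup with at least two elements, let S = R ∪ {1} be the monoid obtained by adjoining an identity, and for z ∈ R let σ_z = {(s,t) ∈ S×S : ∃ p, q ∈ {1,z} with ps = qt}. Then for every z ∈ R, the unique S-map f : S/σ_z → Θ_S onto the one-element S-act is a coessential-cover of Θ_S; equivalently, S/σ_z has no proper subact: every element of S/σ_z generates S/σ_z as an S-act. -/

import Mathlib

variable {R : Type} [Semigroup R]

/-- The right congruence `σ_z` on `S = R¹ = R ∪ {1}` (`WithOne R`):
`(s,t) ∈ σ_z` iff `ps = qt` for some `p, q ∈ {1, z}`. -/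
def σ (z : R) : WithOne R → WithOne R → Prop := fun s t =>
  ∃ p q : WithOne R, (p = 1 ∨ p = (z : WithOne R)) ∧ (q = 1 ∨ q = (z : WithOne R)) ∧
    p * s = q * t

/-- The action of `S` on the quotient `S/σ_z`, given by `[s]·u = [su]`. -/
def qact (z : R) : Quot (σ z) → WithOne R → Quot (σ z) := fun a u =>
  Quot.lift (fun s => Quot.mk (σ z) (s * u))
    (fun s t h => Quot.sound (by
      obtain ⟨p, q, hp, hq, hpq⟩ := h
      exact ⟨p, q, hp, hq, by rw [← mul_assoc, hpq, mul_assoc]⟩)) a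

/-- Let `R` be a right zero semigroup with at least two elements and `S = R¹`. Then for
every `z ∈ R` the unique `S`-map `S/σ_z → Θ_S` onto the one-element `S`-act is a
coessential-cover of `Θ_S`: no proper subact of `S/σ_z` maps onto `Θ_S`, i.e. `S/σ_z` has
no proper subact (every nonempty subset closed under the action is everything);
equivalently every element of `S/σ_z` generates `S/σ_z` as an `S`-act. -/
theorem rz_quotient_coessential_cover (hR : ∀ a b : R, a * b = b) (htwo : ∃ a b : R, a ≠ b) :
    ∀ z : R,
      (∀ B : Set (Quot (σ z)), B.Nonempty →
        (∀ x ∈ B, ∀ u : WithOne R, qact z x u ∈ B) → B = Set.univ) ∧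
      (∀ q q' : Quot (σ z), ∃ u : WithOne R, qact z q u = q') := by
  intro z
  have key : ∀ s : WithOne R, ∀ t : R, s * (t : WithOne R) = t := by
    intro s t
    induction s using WithOne.recOneCoe with
    | one => simp
    | coe a => rw [← WithOne.coe_mul, hR a t]
  have gen : ∀ q q' : Quot (σ z), ∃ u : WithOne R, qact z q u = q' := by
    intro q q'
    induction q using Quot.ind with | _ s => ?_
    induction q' using Quot.ind with | _ t => ?_
    induction t using WithOne.recOneCoe with
    | one =>
      refine ⟨(z : WithOne R), ?_⟩
      show Quot.mk (σ z) (s * z) = Quot.mk (σ z) 1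
      rw [key s z]
      exact Quot.sound ⟨1, (z : WithOne R), Or.inl rfl, Or.inr rfl, by simp⟩
    | coe t =>
      exact ⟨(t : WithOne R), by show Quot.mk (σ z) (s * t) = _; rw [key s t]⟩
  refine ⟨?_, gen⟩
  rintro B ⟨x, hx⟩ hcl
  ext y
  simp only [Set.mem_univ, iff_true]
  obtain ⟨u, hu⟩ := gen x y
  exact hu ▸ hcl x hx u
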